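/- arXiv:math/0311278 — 2 statements merged into one kernel-verified Lean document; each statement's English description precedes it below -/
import Mathlib

section
/- Let V be a vector space over \mathbb{C} with basis u_0, u_1, ..., u_{n-1}. For 0 \leq \alpha \leq n-1 define the polynomial vector w_\alpha(z) = \sum_{j=\alpha}^{n-1} z^{n+\alpha-j-1} u_j \in V \otimes \mathbb{C}[z]. Then for any 0 \leq \alpha_1 < \alpha_2 < ... < \alpha_i \leq n-1, the wedge product w_{\alpha_1}(z) \wedge w_{\alpha_2}(z) \wedge ... \wedge w_{\alpha_i}(z) \in \Lambda^i V \otimes \mathbb{C}[z] is divisible by z^{n(i-1)+\alpha_1}; in particular it is divisible by z^{n(i-1)}. -/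
open Polynomial Finset

section Aux

variable {R M A : Type*} [CommRing R] [AddCommGroup M] [Module R M] [Ring A] [Algebra R A]

private lemma key_swap (m : M) (l : List (R × M)) :
    ExteriorAlgebra.ι R m * (l.map (fun p => ExteriorAlgebra.ι R (p.1 • m + p.2))).prod
      = (-1 : R) ^ l.length •
        ((l.map (fun p => ExteriorAlgebra.ι R p.2)).prod * ExteriorAlgebra.ι R m) := by
  induction l with
  | nil => simp
  | cons p l ih =>
    simp only [List.map_cons, List.prod_cons, List.length_cons]
    have h1 : ExteriorAlgebra.ι R m * ExteriorAlgebra.ι R (p.1 • m + p.2)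
        = -(ExteriorAlgebra.ι R p.2 * ExteriorAlgebra.ι R m) := by
      rw [map_add, map_smul, mul_add, mul_smul_comm, ExteriorAlgebra.ι_sq_zero, smul_zero,
        zero_add, eq_neg_iff_add_eq_zero]
      exact ExteriorAlgebra.ι_add_mul_swap m p.2
    rw [← mul_assoc, h1, neg_mul, mul_assoc, ih, pow_succ, mul_comm, mul_smul, neg_one_smul,
      mul_smul_comm, mul_assoc]

private lemma prod_map_smul (c : R) (l : List A) :
    (l.map (fun a => c • a)).prod = c ^ l.length • l.prod := by
  induction l with
  | nil => simp
  | cons a l ih =>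
    simp only [List.map_cons, List.prod_cons, List.length_cons, ih, smul_mul_smul_comm, pow_succ,
      mul_comm]

end Aux

private noncomputable def eVec (n j : ℕ) : Fin n → Polynomial ℂ :=
  if h : j < n then Pi.single (⟨j, h⟩ : Fin n) 1 else 0

private noncomputable def WVec (n a : ℕ) : Fin n → Polynomial ℂ :=
  ∑ j ∈ Finset.Ico a n, (X : Polynomial ℂ) ^ (n + a - j - 1) • eVec n j

private lemma WVec_eq (n a : ℕ) :
    WVec n a = (X : Polynomial ℂ) ^ a • ∑ j ∈ Finset.Ico a n,
      (X : Polynomial ℂ) ^ (n - j - 1) • eVec n j := by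
  rw [WVec, smul_sum]
  refine Finset.sum_congr rfl fun j hj => ?_
  rw [smul_smul, ← pow_add]
  have := (Finset.mem_Ico.mp hj).2
  congr 2
  omega

private lemma WVec_decomp (n a b : ℕ) (hab : a ≤ b) (hbn : b ≤ n) :
    WVec n b = (X : Polynomial ℂ) ^ (b - a) • WVec n a
      + (X : Polynomial ℂ) ^ n •
        (-(∑ j ∈ Finset.Ico a b, (X : Polynomial ℂ) ^ (b - j - 1) • eVec n j)) := by
  have h1 : (X : Polynomial ℂ) ^ (b - a) • WVec n a
      = (∑ j ∈ Finset.Ico a b, (X : Polynomial ℂ) ^ (n + b - j - 1) • eVec n j) + WVec n b := by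
    rw [WVec, smul_sum, ← Finset.Ico_union_Ico_eq_Ico hab hbn,
      Finset.sum_union (Finset.Ico_disjoint_Ico_consecutive a b n), WVec]
    congr 1
    · refine Finset.sum_congr rfl fun j hj => ?_
      have hj2 := (Finset.mem_Ico.mp hj).2
      rw [smul_smul, ← pow_add]
      congr 2
      omega
    · refine Finset.sum_congr rfl fun j hj => ?_
      have hj2 := (Finset.mem_Ico.mp hj).2
      rw [smul_smul, ← pow_add]
      congr 2
      omega
  have h2 : (X : Polynomial ℂ) ^ n •
        (∑ j ∈ Finset.Ico a b, (X : Polynomial ℂ) ^ (b - j - 1) • eVec n j)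
      = ∑ j ∈ Finset.Ico a b, (X : Polynomial ℂ) ^ (n + b - j - 1) • eVec n j := by
    rw [smul_sum]
    refine Finset.sum_congr rfl fun j hj => ?_
    have hj2 := (Finset.mem_Ico.mp hj).2
    rw [smul_smul, ← pow_add]
    congr 2
    omega
  rw [smul_neg, h2, h1]
  abel

/-- Let `V` have basis `u_0, ..., u_{n-1}` and set
`w_α(z) = ∑_{j=α}^{n-1} z^{n+α-j-1} u_j ∈ V ⊗ ℂ[z]`.
For `0 ≤ α_1 < α_2 < ... < α_i ≤ n-1`, the wedge product
`w_{α_1}(z) ∧ ... ∧ w_{α_i}(z) ∈ Λ^i V ⊗ ℂ[z]` is divisible by `z^{n(i-1)+α_1}`;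
in particular it is divisible by `z^{n(i-1)}`.
We realize `V ⊗ ℂ[z]` as the free `ℂ[z]`-module `Fin n → ℂ[z]` with standard basis `u`,
and the wedge product as a product in the exterior algebra over `ℂ[z]`. -/
theorem wedge_divisibility (n i : ℕ) (hi : 0 < i) (α : Fin i → ℕ)
    (hmono : StrictMono α) (hlt : ∀ k, α k < n) :
    let u : ℕ → ExteriorAlgebra (Polynomial ℂ) (Fin n → Polynomial ℂ) :=
      fun j => ExteriorAlgebra.ι (Polynomial ℂ)
        (if h : j < n then Pi.single (⟨j, h⟩ : Fin n) 1 else 0)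
    let w : ℕ → ExteriorAlgebra (Polynomial ℂ) (Fin n → Polynomial ℂ) :=
      fun a => ∑ j ∈ Finset.Ico a n, (X : Polynomial ℂ) ^ (n + a - j - 1) • u j
    (∃ y, (List.ofFn fun k => w (α k)).prod =
        (X : Polynomial ℂ) ^ (n * (i - 1) + α ⟨0, hi⟩) • y) ∧
    (∃ y, (List.ofFn fun k => w (α k)).prod = (X : Polynomial ℂ) ^ (n * (i - 1)) • y) := by
  intro u w
  obtain ⟨i', rfl⟩ : ∃ i', i = i' + 1 := ⟨i - 1, (Nat.succ_pred_eq_of_pos hi).symm⟩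
  have hmk : (⟨0, hi⟩ : Fin (i' + 1)) = 0 := rfl
  have hw : ∀ a, w a = ExteriorAlgebra.ι (Polynomial ℂ) (WVec n a) := by
    intro a
    show (∑ j ∈ Finset.Ico a n, (X : Polynomial ℂ) ^ (n + a - j - 1) • u j) = _
    rw [WVec, map_sum]
    refine Finset.sum_congr rfl fun j hj => ?_
    rw [map_smul]
    rfl
  set m : Fin n → Polynomial ℂ := WVec n (α 0) with hm
  set s : Fin i' → (Fin n → Polynomial ℂ) := fun k =>
    -(∑ j ∈ Finset.Ico (α 0) (α k.succ), (X : Polynomial ℂ) ^ (α k.succ - j - 1) • eVec n j)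
    with hs
  have hWk : ∀ k : Fin i', WVec n (α k.succ)
      = (X : Polynomial ℂ) ^ (α k.succ - α 0) • m + (X : Polynomial ℂ) ^ n • s k := fun k =>
    WVec_decomp n (α 0) (α k.succ) (hmono.monotone (Fin.zero_le _)) (hlt _).le
  have htail : (List.ofFn fun k : Fin i' =>
        ExteriorAlgebra.ι (Polynomial ℂ) (WVec n (α k.succ)))
      = (List.ofFn fun k : Fin i' =>
          (((X : Polynomial ℂ) ^ (α k.succ - α 0)), (X : Polynomial ℂ) ^ n • s k)).map
        (fun p => ExteriorAlgebra.ι (Polynomial ℂ) (p.1 • m + p.2)) := by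
    rw [List.map_ofFn]
    congr 1
    funext k
    simp [Function.comp, hWk k]
  have hmid : (List.ofFn fun k : Fin i' =>
        (((X : Polynomial ℂ) ^ (α k.succ - α 0)), (X : Polynomial ℂ) ^ n • s k)).map
        (fun p => ExteriorAlgebra.ι (Polynomial ℂ) p.2)
      = (List.ofFn fun k : Fin i' => ExteriorAlgebra.ι (Polynomial ℂ) (s k)).map
        (fun a => (X : Polynomial ℂ) ^ n • a) := by
    rw [List.map_ofFn, List.map_ofFn]
    congr 1
    funext k
    simp [Function.comp]
  set v : Fin n → Polynomial ℂ :=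
    ∑ j ∈ Finset.Ico (α 0) n, (X : Polynomial ℂ) ^ (n - j - 1) • eVec n j with hv
  have hmv : ExteriorAlgebra.ι (Polynomial ℂ) m = (X : Polynomial ℂ) ^ (α 0) •
      ExteriorAlgebra.ι (Polynomial ℂ) v := by
    rw [hm, WVec_eq, map_smul, hv]
  set Q : ExteriorAlgebra (Polynomial ℂ) (Fin n → Polynomial ℂ) :=
    (List.ofFn fun k : Fin i' => ExteriorAlgebra.ι (Polynomial ℂ) (s k)).prod with hQ
  have hprod : (List.ofFn fun k : Fin (i' + 1) => w (α k)).prod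
      = (X : Polynomial ℂ) ^ (n * i' + α 0) •
        ((-1 : Polynomial ℂ) ^ i' • (Q * ExteriorAlgebra.ι (Polynomial ℂ) v)) := by
    simp only [hw]
    rw [List.ofFn_succ, List.prod_cons, htail, key_swap, hmid, prod_map_smul]
    simp only [List.length_ofFn, List.length_map]
    rw [hmv, smul_mul_smul_comm, ← pow_mul, ← pow_add]
    rw [smul_comm]
  constructor
  · refine ⟨(-1 : Polynomial ℂ) ^ i' • (Q * ExteriorAlgebra.ι (Polynomial ℂ) v), ?_⟩
    rw [hprod, hmk]
    simp
  · refine ⟨(X : Polynomial ℂ) ^ (α 0) •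
      ((-1 : Polynomial ℂ) ^ i' • (Q * ExteriorAlgebra.ι (Polynomial ℂ) v)), ?_⟩
    rw [hprod]
    simp only [Nat.add_sub_cancel, pow_add]
    module
end

section
/- Let n \geq 1 and let V = \mathbb{C}^2 \otimes (\mathbb{C}[t]/t^n) with basis v_0,...,v_{n-1}, u_0,...,u_{n-1} (v_i = v \otimes t^i, u_i = u \otimes t^i). Define operators e_j (0 \leq j \leq n-1) by e_j v_i = u_{i+j} (with u_m = 0 for m \geq n) and e_j u_i = 0, and let e^{(n)}(z) = e_{n-1} + z e_{n-2} + ... + z^{n-1} e_0, acting on \Lambda^n V by the Leibniz rule. Then for every i \geq 1, the series e^{(n)}(z)^i (v_0 \wedge ... \wedge v_{n-1}) \in \Lambda^n V \otimes \mathbb{C}[z] is divisible by z^{n(i-1)}. -/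
open Polynomial Finset

abbrev FusV (n : ℕ) := (Fin n ⊕ Fin n) → Polynomial ℂ
abbrev FusE (n : ℕ) := ExteriorAlgebra (Polynomial ℂ) (FusV n)

noncomputable def fusG (n : ℕ) (i : Fin n) : FusV n := Pi.single (Sum.inl i) 1
noncomputable def fusU (n : ℕ) (a : Fin n) : FusV n := Pi.single (Sum.inr a) 1
noncomputable def fusW (n : ℕ) (k : Fin n) : FusV n :=
  ∑ a : Fin n, if (k : ℕ) ≤ (a : ℕ) then
    ((X : Polynomial ℂ) ^ (n - 1 - (a : ℕ) + (k : ℕ))) • fusU n a else 0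

lemma shift_sum {M : Type*} [AddCommMonoid M] (n : ℕ) (g : ℕ → M) (k : ℕ) (a : Fin n) :
    (∑ j : Fin n, if (a : ℕ) = k + (j : ℕ) then g (j : ℕ) else 0) =
      if k ≤ (a : ℕ) then g ((a : ℕ) - k) else 0 := by
  by_cases hk : k ≤ (a : ℕ)
  · rw [if_pos hk]
    have ha : (a : ℕ) - k < n := lt_of_le_of_lt (Nat.sub_le _ _) a.isLt
    rw [Finset.sum_eq_single (⟨(a : ℕ) - k, ha⟩ : Fin n)]
    · rw [if_pos (by simp; omega)]
    · intro b _ hb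
      rw [if_neg]
      intro h
      exact hb (Fin.ext (by simp only [Fin.val_mk]; omega))
    · simp
  · rw [if_neg hk]
    apply Finset.sum_eq_zero
    intro b _
    rw [if_neg (by omega)]

lemma dite_to_sum {M : Type*} [AddCommMonoid M] (n : ℕ) (m : ℕ) (F : Fin n → M) :
    (if h : m < n then F ⟨m, h⟩ else 0) = ∑ a : Fin n, if (a : ℕ) = m then F a else 0 := by
  by_cases h : m < n
  · rw [dif_pos h, Finset.sum_eq_single (⟨m, h⟩ : Fin n)]
    · rw [if_pos rfl]
    · intro b _ hb
      rw [if_neg]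
      intro hh
      exact hb (Fin.ext hh)
    · simp
  · rw [dif_neg h]
    refine (Finset.sum_eq_zero ?_).symm
    intro b _
    rw [if_neg (by omega)]

lemma fusW_sub (n : ℕ) (s k : Fin n) (hsk : (s : ℕ) < (k : ℕ)) :
    ∃ w : FusV n, fusW n k - (X : Polynomial ℂ) ^ ((k : ℕ) - (s : ℕ)) • fusW n s
      = (X : Polynomial ℂ) ^ n • w := by
  refine ⟨∑ a : Fin n, if (s : ℕ) ≤ (a : ℕ) ∧ (a : ℕ) < (k : ℕ) then
      -(((X : Polynomial ℂ) ^ ((k : ℕ) - 1 - (a : ℕ))) • fusU n a) else 0, ?_⟩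
  rw [fusW, fusW, Finset.smul_sum, Finset.smul_sum, ← Finset.sum_sub_distrib]
  refine Finset.sum_congr rfl (fun a _ => ?_)
  have han : (a : ℕ) < n := a.isLt
  by_cases h1 : (k : ℕ) ≤ (a : ℕ)
  · have h2 : (s : ℕ) ≤ (a : ℕ) := by omega
    rw [if_pos h1, if_pos h2, if_neg (by omega), smul_zero, smul_smul, ← pow_add]
    have he : (k : ℕ) - (s : ℕ) + (n - 1 - (a : ℕ) + (s : ℕ)) = n - 1 - (a : ℕ) + (k : ℕ) := by
      omega
    rw [he, sub_self]
  · by_cases h2 : (s : ℕ) ≤ (a : ℕ)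
    · rw [if_neg h1, if_pos h2, if_pos ⟨h2, by omega⟩, smul_smul, ← pow_add, smul_neg,
        smul_smul, ← pow_add]
      have he : (k : ℕ) - (s : ℕ) + (n - 1 - (a : ℕ) + (s : ℕ)) = n + ((k : ℕ) - 1 - (a : ℕ)) := by
        omega
      rw [he, zero_sub]
    · rw [if_neg h1, if_neg h2, if_neg (by omega), smul_zero, smul_zero, sub_zero]

lemma deriv_ofFn_prod {A : Type*} [Ring A] (T : A → A)
    (hT : ∀ x y, T (x * y) = T x * y + x * T y) :
    ∀ (m : ℕ) (f : Fin m → A),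
      T (List.ofFn f).prod
        = ∑ k : Fin m, (List.ofFn fun l => if l = k then T (f l) else f l).prod := by
  intro m
  induction m with
  | zero =>
    intro f
    have h1 : T 1 = 0 := by
      have h2 : T 1 = T 1 + T 1 := by simpa using hT 1 1
      exact (left_eq_add.mp h2)
    simp [h1]
  | succ m ih =>
    intro f
    rw [List.ofFn_succ, List.prod_cons, hT, ih (fun l => f l.succ), Fin.sum_univ_succ]
    congr 1
    · rw [List.ofFn_succ, List.prod_cons, if_pos rfl]
      have h3 : (fun l : Fin m => if l.succ = (0 : Fin (m+1)) then T (f l.succ) else f l.succ)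
          = fun l => f l.succ := by
        funext l; rw [if_neg (Fin.succ_ne_zero l)]
      rw [h3]
    · rw [Finset.mul_sum]
      refine Finset.sum_congr rfl fun k _ => ?_
      rw [List.ofFn_succ, List.prod_cons, if_neg (Fin.succ_ne_zero k).symm]
      have h3 : (fun l : Fin m => if l.succ = k.succ then T (f l.succ) else f l.succ)
          = fun l => if l = k then T (f l.succ) else f l.succ := by
        funext l; simp [Fin.succ_inj]
      rw [h3]

noncomputable def fusEz (n : ℕ) (D : Fin n → Module.End (Polynomial ℂ) (FusE n)) :
    Module.End (Polynomial ℂ) (FusE n) :=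
  ∑ j : Fin n, (X : Polynomial ℂ) ^ (n - 1 - (j : ℕ)) • D j

variable {n : ℕ} {D : Fin n → Module.End (Polynomial ℂ) (FusE n)}

lemma fusEz_leibniz (hder : ∀ j x y, D j (x * y) = D j x * y + x * D j y) (x y : FusE n) :
    fusEz n D (x * y) = fusEz n D x * y + x * fusEz n D y := by
  simp only [fusEz, LinearMap.sum_apply, LinearMap.smul_apply, hder, smul_add,
    Finset.sum_add_distrib, Finset.sum_mul, Finset.mul_sum, smul_mul_assoc, mul_smul_comm]

lemma fusEz_iotaU
    (hu : ∀ (j i : Fin n), D j (ExteriorAlgebra.ι (Polynomial ℂ)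
      (Pi.single (Sum.inr i) (1 : Polynomial ℂ))) = 0) (a : Fin n) :
    fusEz n D (ExteriorAlgebra.ι (Polynomial ℂ) (fusU n a)) = 0 := by
  simp [fusEz, LinearMap.sum_apply, LinearMap.smul_apply, fusU, hu]

lemma fusEz_iotaG
    (hv : ∀ (j i : Fin n), D j (ExteriorAlgebra.ι (Polynomial ℂ)
        (Pi.single (Sum.inl i) (1 : Polynomial ℂ))) =
      if h : (i : ℕ) + (j : ℕ) < n then
        ExteriorAlgebra.ι (Polynomial ℂ)
          (Pi.single (Sum.inr (⟨(i : ℕ) + (j : ℕ), h⟩ : Fin n)) (1 : Polynomial ℂ))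
      else 0) (k : Fin n) :
    fusEz n D (ExteriorAlgebra.ι (Polynomial ℂ) (fusG n k))
      = ExteriorAlgebra.ι (Polynomial ℂ) (fusW n k) := by
  have step : ∀ j : Fin n, D j (ExteriorAlgebra.ι (Polynomial ℂ) (fusG n k)) =
      ∑ a : Fin n, if (a : ℕ) = (k : ℕ) + (j : ℕ) then
        ExteriorAlgebra.ι (Polynomial ℂ) (fusU n a) else 0 := by
    intro j
    rw [fusG, hv j k]
    simp only [fusU]
    exact dite_to_sum n ((k : ℕ) + (j : ℕ))
      (fun a => ExteriorAlgebra.ι (Polynomial ℂ) (Pi.single (Sum.inr a) 1))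
  rw [fusEz]
  simp only [LinearMap.sum_apply, LinearMap.smul_apply, step, Finset.smul_sum, smul_ite,
    smul_zero]
  rw [Finset.sum_comm, fusW, map_sum]
  refine Finset.sum_congr rfl (fun a _ => ?_)
  rw [shift_sum n (fun jn => (X : Polynomial ℂ) ^ (n - 1 - jn) •
    ExteriorAlgebra.ι (Polynomial ℂ) (fusU n a)) (k : ℕ) a]
  by_cases h : (k : ℕ) ≤ (a : ℕ)
  · rw [if_pos h, if_pos h, map_smul]
    have he : n - 1 - ((a : ℕ) - (k : ℕ)) = n - 1 - (a : ℕ) + (k : ℕ) := by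
      have := a.isLt; omega
    rw [he]
  · rw [if_neg h, if_neg h, map_zero]

noncomputable def fusF (n : ℕ) (S : Finset (Fin n)) : FusE n :=
  ExteriorAlgebra.ιMulti (Polynomial ℂ) n (fun k => if k ∈ S then fusW n k else fusG n k)

lemma fus_step1
    (hder : ∀ j x y, D j (x * y) = D j x * y + x * D j y)
    (hv : ∀ (j i : Fin n), D j (ExteriorAlgebra.ι (Polynomial ℂ)
        (Pi.single (Sum.inl i) (1 : Polynomial ℂ))) =
      if h : (i : ℕ) + (j : ℕ) < n then
        ExteriorAlgebra.ι (Polynomial ℂ)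
          (Pi.single (Sum.inr (⟨(i : ℕ) + (j : ℕ), h⟩ : Fin n)) (1 : Polynomial ℂ))
      else 0)
    (hu : ∀ (j i : Fin n), D j (ExteriorAlgebra.ι (Polynomial ℂ)
      (Pi.single (Sum.inr i) (1 : Polynomial ℂ))) = 0)
    (S : Finset (Fin n)) :
    fusEz n D (fusF n S) = ∑ k : Fin n, if k ∈ S then 0 else fusF n (insert k S) := by
  have hWzero : ∀ k : Fin n, fusEz n D (ExteriorAlgebra.ι (Polynomial ℂ) (fusW n k)) = 0 := by
    intro k
    rw [fusW, map_sum, map_sum]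
    refine Finset.sum_eq_zero fun a _ => ?_
    by_cases ha : (k : ℕ) ≤ (a : ℕ)
    · rw [if_pos ha, map_smul, map_smul, fusEz_iotaU hu a, smul_zero]
    · rw [if_neg ha, map_zero, map_zero]
  rw [fusF, ExteriorAlgebra.ιMulti_apply,
    deriv_ofFn_prod (⇑(fusEz n D)) (fusEz_leibniz hder) n
      (fun k => ExteriorAlgebra.ι (Polynomial ℂ) (if k ∈ S then fusW n k else fusG n k))]
  refine Finset.sum_congr rfl fun k _ => ?_
  by_cases hk : k ∈ S
  · rw [if_pos hk]
    have h1 : (fun l => if l = k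
          then fusEz n D (ExteriorAlgebra.ι (Polynomial ℂ)
            (if l ∈ S then fusW n l else fusG n l))
          else ExteriorAlgebra.ι (Polynomial ℂ) (if l ∈ S then fusW n l else fusG n l))
        = fun l => ExteriorAlgebra.ι (Polynomial ℂ)
            (if l = k then 0 else if l ∈ S then fusW n l else fusG n l) := by
      funext l
      by_cases hl : l = k
      · subst hl
        rw [if_pos rfl, if_pos rfl, if_pos hk, map_zero]
        exact hWzero l
      · rw [if_neg hl, if_neg hl]
    rw [h1, ← ExteriorAlgebra.ιMulti_apply]
    exact (ExteriorAlgebra.ιMulti (Polynomial ℂ) n).toMultilinearMap.map_coord_zero k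
      (by rw [if_pos rfl])
  · rw [if_neg hk]
    have h1 : (fun l => if l = k
          then fusEz n D (ExteriorAlgebra.ι (Polynomial ℂ)
            (if l ∈ S then fusW n l else fusG n l))
          else ExteriorAlgebra.ι (Polynomial ℂ) (if l ∈ S then fusW n l else fusG n l))
        = fun l => ExteriorAlgebra.ι (Polynomial ℂ)
            (if l ∈ insert k S then fusW n l else fusG n l) := by
      funext l
      by_cases hl : l = k
      · subst hl
        rw [if_pos rfl, if_pos (Finset.mem_insert_self _ _), if_neg hk]
        exact fusEz_iotaG hv l
      · rw [if_neg hl]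
        simp [Finset.mem_insert, hl]
    rw [h1, ← ExteriorAlgebra.ιMulti_apply, fusF]

lemma fus_step2gen (n : ℕ) (T : Finset (Fin n)) :
    ∀ (s₁ : Fin n) (m : Fin n → FusV n), s₁ ∉ T → m s₁ = fusW n s₁ →
      (∀ k ∈ T, (s₁ : ℕ) < (k : ℕ) ∧ m k = fusW n k) →
      ∃ y, ExteriorAlgebra.ιMulti (Polynomial ℂ) n m
        = (X : Polynomial ℂ) ^ (n * T.card) • y := by
  induction T using Finset.induction_on with
  | empty =>
    intro s₁ m _ _ _
    exact ⟨ExteriorAlgebra.ιMulti (Polynomial ℂ) n m, by simp⟩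
  | @insert k T' hk ih =>
    intro s₁ m hs₁ hms₁ hmem
    have hks : (s₁ : ℕ) < (k : ℕ) := (hmem k (Finset.mem_insert_self _ _)).1
    have hmk : m k = fusW n k := (hmem k (Finset.mem_insert_self _ _)).2
    have hne : k ≠ s₁ := fun h => by rw [h] at hks; omega
    obtain ⟨w, hw⟩ := fusW_sub n s₁ k hks
    have key : ExteriorAlgebra.ιMulti (Polynomial ℂ) n m
        = (X : Polynomial ℂ) ^ n •
          ExteriorAlgebra.ιMulti (Polynomial ℂ) n (Function.update m k w) := by
    -- decompose m k = (W k - X^(k-s₁) • W s₁) + X^(k-s₁) • W s₁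
      have h1 : m = Function.update m k
          ((fusW n k - (X : Polynomial ℂ) ^ ((k : ℕ) - (s₁ : ℕ)) • fusW n s₁)
            + (X : Polynomial ℂ) ^ ((k : ℕ) - (s₁ : ℕ)) • fusW n s₁) := by
        rw [sub_add_cancel, ← hmk, Function.update_eq_self]
      conv_lhs => rw [h1]
      rw [AlternatingMap.map_update_add]
      have h2 : (ExteriorAlgebra.ιMulti (Polynomial ℂ) n)
          (Function.update m k ((X : Polynomial ℂ) ^ ((k : ℕ) - (s₁ : ℕ)) • fusW n s₁)) = 0 := by
        rw [AlternatingMap.map_update_smul]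
        rw [AlternatingMap.map_eq_zero_of_eq _ _ (i := k) (j := s₁) ?_ hne, smul_zero]
        rw [Function.update_self, Function.update_of_ne (Ne.symm hne), hms₁]
      rw [h2, add_zero, hw, AlternatingMap.map_update_smul]
    obtain ⟨y, hy⟩ := ih s₁ (Function.update m k w)
      (fun h => hs₁ (Finset.mem_insert_of_mem h))
      (by rw [Function.update_of_ne (Ne.symm hne), hms₁])
      (fun l hl => ⟨(hmem l (Finset.mem_insert_of_mem hl)).1, by
        rw [Function.update_of_ne (by rintro rfl; exact hk hl),
          (hmem l (Finset.mem_insert_of_mem hl)).2]⟩)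
    refine ⟨y, ?_⟩
    rw [key, hy, smul_smul, ← pow_add, Finset.card_insert_of_notMem hk]
    have he : n + n * T'.card = n * (T'.card + 1) := by ring
    rw [he]

lemma fus_step2 (n : ℕ) (S : Finset (Fin n)) (hS : S.Nonempty) :
    ∃ y, fusF n S = (X : Polynomial ℂ) ^ (n * (S.card - 1)) • y := by
  have hs₁S : S.min' hS ∈ S := S.min'_mem hS
  obtain ⟨y, hy⟩ := fus_step2gen n (S.erase (S.min' hS)) (S.min' hS)
    (fun k => if k ∈ S then fusW n k else fusG n k)
    (Finset.notMem_erase _ _) (by simp only [if_pos hs₁S])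
    (fun k hkmem => by
      have h1 : S.min' hS ≤ k := S.min'_le k (Finset.mem_of_mem_erase hkmem)
      have h2 : k ≠ S.min' hS := Finset.ne_of_mem_erase hkmem
      exact ⟨Fin.lt_iff_val_lt_val.mp (lt_of_le_of_ne h1 (Ne.symm h2)),
        by simp only [if_pos (Finset.mem_of_mem_erase hkmem)]⟩)
  exact ⟨y, by rw [fusF, hy, Finset.card_erase_of_mem hs₁S]⟩

/-- Let `V = ℂ² ⊗ (ℂ[t]/tⁿ)` with basis `v_0,...,v_{n-1},u_0,...,u_{n-1}` (realized over the
coefficient ring `ℂ[z]` as `(Fin n ⊕ Fin n) → ℂ[z]`), and let `e_j` be derivations of the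
exterior algebra with `e_j v_i = u_{i+j}` (zero if `i+j ≥ n`) and `e_j u_i = 0`.  Set
`e⁽ⁿ⁾(z) = e_{n-1} + z e_{n-2} + ... + z^{n-1} e_0`.  Then for every `i`, the element
`e⁽ⁿ⁾(z)^i (v_0 ∧ ... ∧ v_{n-1})` is divisible by `z^{n(i-1)}`. -/
theorem fusion_defining_relations (n : ℕ)
    (D : Fin n → Module.End (Polynomial ℂ)
      (ExteriorAlgebra (Polynomial ℂ) ((Fin n ⊕ Fin n) → Polynomial ℂ)))
    (hder : ∀ j x y, D j (x * y) = D j x * y + x * D j y)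
    (hv : ∀ (j i : Fin n),
      D j (ExteriorAlgebra.ι (Polynomial ℂ)
          (Pi.single (Sum.inl i) (1 : Polynomial ℂ))) =
        if h : (i : ℕ) + (j : ℕ) < n then
          ExteriorAlgebra.ι (Polynomial ℂ)
            (Pi.single (Sum.inr (⟨(i : ℕ) + (j : ℕ), h⟩ : Fin n)) (1 : Polynomial ℂ))
        else 0)
    (hu : ∀ (j i : Fin n),
      D j (ExteriorAlgebra.ι (Polynomial ℂ)
          (Pi.single (Sum.inr i) (1 : Polynomial ℂ))) = 0) :
    let Ez : Module.End (Polynomial ℂ)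
        (ExteriorAlgebra (Polynomial ℂ) ((Fin n ⊕ Fin n) → Polynomial ℂ)) :=
      ∑ j : Fin n, (X : Polynomial ℂ) ^ (n - 1 - (j : ℕ)) • D j
    let base : ExteriorAlgebra (Polynomial ℂ) ((Fin n ⊕ Fin n) → Polynomial ℂ) :=
      (List.ofFn fun i : Fin n =>
        ExteriorAlgebra.ι (Polynomial ℂ) (Pi.single (Sum.inl i) (1 : Polynomial ℂ))).prod
    ∀ i : ℕ, 1 ≤ i → ∃ y, (Ez ^ i) base = (X : Polynomial ℂ) ^ (n * (i - 1)) • y := by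
  intro Ez base i hi
  have hEz : Ez = fusEz n D := rfl
  have hbase : base = fusF n ∅ := by
    rw [fusF, ExteriorAlgebra.ιMulti_apply]
    congr 1
  have hspan : ∀ j : ℕ, (fusEz n D ^ j) (fusF n ∅) ∈
      Submodule.span (Polynomial ℂ)
        {x | ∃ S : Finset (Fin n), S.card = j ∧ x = fusF n S} := by
    intro j
    induction j with
    | zero =>
      rw [pow_zero, Module.End.one_apply]
      exact Submodule.subset_span ⟨∅, by simp, rfl⟩
    | succ j ihj =>
      have hle : Submodule.span (Polynomial ℂ)
            {x | ∃ S : Finset (Fin n), S.card = j ∧ x = fusF n S} ≤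
          Submodule.comap (fusEz n D)
            (Submodule.span (Polynomial ℂ)
              {x | ∃ S : Finset (Fin n), S.card = j + 1 ∧ x = fusF n S}) := by
        rw [Submodule.span_le]
        rintro x ⟨S, hcard, rfl⟩
        simp only [SetLike.mem_coe, Submodule.mem_comap]
        rw [fus_step1 hder hv hu S]
        refine Submodule.sum_mem _ fun k _ => ?_
        by_cases hk : k ∈ S
        · rw [if_pos hk]; exact Submodule.zero_mem _
        · rw [if_neg hk]
          exact Submodule.subset_span
            ⟨insert k S, by rw [Finset.card_insert_of_notMem hk, hcard], rfl⟩
      rw [pow_succ', Module.End.mul_apply]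
      exact hle ihj
  have hmem := hspan i
  have hdiv : Submodule.span (Polynomial ℂ)
        {x | ∃ S : Finset (Fin n), S.card = i ∧ x = fusF n S} ≤
      LinearMap.range ((X : Polynomial ℂ) ^ (n * (i - 1)) •
        (LinearMap.id : FusE n →ₗ[Polynomial ℂ] FusE n)) := by
    rw [Submodule.span_le]
    rintro x ⟨S, hcard, rfl⟩
    have hS : S.Nonempty := Finset.card_pos.mp (by omega)
    obtain ⟨y, hy⟩ := fus_step2 n S hS
    refine ⟨y, ?_⟩
    simp only [LinearMap.smul_apply, LinearMap.id_apply]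
    rw [hy, hcard]
  obtain ⟨y, hy⟩ := hdiv hmem
  refine ⟨y, ?_⟩
  rw [hEz, hbase, ← hy]
  simp
end
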